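/- For real numbers a and b and p ≥ 2, one has (|a|^(p-2) a - |b|^(p-2) b)(a - b) ≥ c_p · |a - b|^2 · (|a| + |a - b|)^(p-2) for some constant c_p > 0 depending only on p (for instance c_p = 2^(2-p) suffices up to a further constant). -/

import Mathlib

private lemma rpow_diff_mul_diff_nonneg (e : ℝ) (he : 0 ≤ e) {s t : ℝ}
    (hs : 0 ≤ s) (ht : 0 ≤ t) : 0 ≤ (s ^ e - t ^ e) * (s - t) := by
  rcases le_total s t with h | h
  · have h1 : s ^ e ≤ t ^ e := Real.rpow_le_rpow hs h he
    nlinarith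
  · have h1 : t ^ e ≤ s ^ e := Real.rpow_le_rpow ht h he
    nlinarith

private lemma key_ineq (e : ℝ) (he : 0 ≤ e) (a b : ℝ) :
    (1 / 2) * (|a| ^ e + |b| ^ e) * (a - b) ^ 2 ≤
      (|a| ^ e * a - |b| ^ e * b) * (a - b) := by
  have h := mul_nonneg
    (rpow_diff_mul_diff_nonneg e he (abs_nonneg a) (abs_nonneg b))
    (add_nonneg (abs_nonneg a) (abs_nonneg b))
  have h2 : 0 ≤ (|a| ^ e - |b| ^ e) * (a ^ 2 - b ^ 2) := by
    have hsq : a ^ 2 - b ^ 2 = (|a| - |b|) * (|a| + |b|) := by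
      rw [← sq_abs a, ← sq_abs b]; ring
    rw [hsq, ← mul_assoc]; exact h
  nlinarith [h2]

private lemma sum_rpow_bound (e : ℝ) (he : 0 ≤ e) (a b : ℝ) :
    (|a| + |a - b|) ^ e ≤ (4 : ℝ) ^ e * (|a| ^ e + |b| ^ e) := by
  have hab : |a - b| ≤ |a| + |b| := abs_sub a b
  have hmax0 : (0:ℝ) ≤ max |a| |b| := le_trans (abs_nonneg a) (le_max_left _ _)
  have hmax : (|a| + |a - b|) ≤ 4 * max |a| |b| := by
    have h1 : |a| ≤ max |a| |b| := le_max_left _ _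
    have h2 : |b| ≤ max |a| |b| := le_max_right _ _
    linarith
  have h0 : 0 ≤ |a| + |a - b| := add_nonneg (abs_nonneg a) (abs_nonneg _)
  calc (|a| + |a - b|) ^ e ≤ (4 * max |a| |b|) ^ e :=
        Real.rpow_le_rpow h0 hmax he
    _ = (4 : ℝ) ^ e * (max |a| |b|) ^ e := by
        rw [Real.mul_rpow (by norm_num) hmax0]
    _ ≤ (4 : ℝ) ^ e * (|a| ^ e + |b| ^ e) := by
        apply mul_le_mul_of_nonneg_left _ (Real.rpow_nonneg (by norm_num) e)
        rcases max_cases |a| |b| with ⟨hm, _⟩ | ⟨hm, _⟩ <;> rw [hm]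
        · nlinarith [Real.rpow_nonneg (abs_nonneg b) e]
        · nlinarith [Real.rpow_nonneg (abs_nonneg a) e]

theorem pointwise_quasinorm_coercivity (p : ℝ) (hp : 2 ≤ p) :
    ∃ c : ℝ, 0 < c ∧ ∀ a b : ℝ,
      (|a| ^ (p - 2) * a - |b| ^ (p - 2) * b) * (a - b) ≥
        c * |a - b| ^ (2 : ℝ) * (|a| + |a - b|) ^ (p - 2) := by
  set e : ℝ := p - 2 with he_def
  have he : 0 ≤ e := by linarith
  have h4 : (0 : ℝ) < (4 : ℝ) ^ e := Real.rpow_pos_of_pos (by norm_num) e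
  refine ⟨1 / (2 * (4 : ℝ) ^ e), by positivity, fun a b => ?_⟩
  have hsq : |a - b| ^ (2 : ℝ) = (a - b) ^ 2 := by
    rw [show (2 : ℝ) = ((2 : ℕ) : ℝ) by norm_num, Real.rpow_natCast, sq_abs]
  rw [ge_iff_le, hsq]
  have h1 := sum_rpow_bound e he a b
  have h2 := key_ineq e he a b
  have hc : 0 ≤ 1 / (2 * (4 : ℝ) ^ e) * (a - b) ^ 2 := by positivity
  calc 1 / (2 * (4 : ℝ) ^ e) * (a - b) ^ 2 * (|a| + |a - b|) ^ e
      ≤ 1 / (2 * (4 : ℝ) ^ e) * (a - b) ^ 2 * ((4 : ℝ) ^ e * (|a| ^ e + |b| ^ e)) :=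
        mul_le_mul_of_nonneg_left h1 hc
    _ = (1 / 2) * (|a| ^ e + |b| ^ e) * (a - b) ^ 2 := by
        field_simp
    _ ≤ (|a| ^ e * a - |b| ^ e * b) * (a - b) := h2
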